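/- If (G, S) and (H, R) are non-redundant rooted multigraphs (i.e., admitting no non-trivial non-edge-collapsing graph equivalence relation), then their unfolding trees T(G, S) and T(H, R) are rooted-isomorphic if and only if (G, S) and (H, R) are rooted-isomorphic. -/

import Mathlib

/-- A directed multigraph: vertices, edges, origin and terminus maps. -/
structure Multigraph where
  V : Type
  E : Type
  o : E → V
  t : E → V

namespace Multigraph

/-- Graph homomorphism. -/
structure Hom (G H : Multigraph) where
  onV : G.V → H.V
  onE : G.E → H.E
  map_o : ∀ e, H.o (onE e) = onV (G.o e)
  map_t : ∀ e, H.t (onE e) = onV (G.t e)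

/-- Graph isomorphism. -/
structure Iso (G H : Multigraph) extends Hom G H where
  bijV : Function.Bijective onV
  bijE : Function.Bijective onE

/-- Rooted isomorphism of rooted multigraphs. -/
def RootedIso (G : Multigraph) (S : G.V) (H : Multigraph) (R : H.V) : Prop :=
  ∃ φ : Iso G H, φ.onV S = R

/-- Outgoing edge neighbourhood of a vertex. -/
def Eo (G : Multigraph) (v : G.V) : Set G.E := {e | G.o e = v}

/-- Incoming edge neighbourhood of a vertex. -/
def Et (G : Multigraph) (v : G.V) : Set G.E := {e | G.t e = v}

/-- A graph equivalence relation: compatible equivalences on vertices and edges. -/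
structure GraphEquiv (G : Multigraph) where
  rV : G.V → G.V → Prop
  rE : G.E → G.E → Prop
  equivV : Equivalence rV
  equivE : Equivalence rE
  compat_o : ∀ e f, rE e f → rV (G.o e) (G.o f)
  compat_t : ∀ e f, rE e f → rV (G.t e) (G.t f)

/-- Non-edge-collapsing graph equivalence relation. -/
def GraphEquiv.NonEdgeCollapsing {G : Multigraph} (s : GraphEquiv G) : Prop :=
  ∀ v v', s.rV v v' → ∀ e, G.o e = v → ∃! e', G.o e' = v' ∧ s.rE e e'

/-- Quotient graph by a graph equivalence relation. -/
def GraphEquiv.quot {G : Multigraph} (s : GraphEquiv G) : Multigraph where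
  V := Quot s.rV
  E := Quot s.rE
  o := Quot.lift (fun e => Quot.mk s.rV (G.o e)) (fun e f h => Quot.sound (s.compat_o e f h))
  t := Quot.lift (fun e => Quot.mk s.rV (G.t e)) (fun e f h => Quot.sound (s.compat_t e f h))

/-- A graph is non-redundant if its only non-edge-collapsing equivalence relation is trivial. -/
def NonRedundant (G : Multigraph) : Prop :=
  ∀ s : GraphEquiv G, s.NonEdgeCollapsing →
    (∀ v w, s.rV v w → v = w) ∧ (∀ e f, s.rE e f → e = f)

/-- Directed walks in `G` starting at `S`, indexed by the terminus. -/
inductive Walk (G : Multigraph) (S : G.V) : G.V → Type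
  | nil : Walk G S S
  | snoc {v : G.V} (w : Walk G S v) (e : G.E) (h : G.o e = v) : Walk G S (G.t e)

/-- Length of a walk. -/
def Walk.length {G : Multigraph} {S : G.V} : ∀ {v : G.V}, Walk G S v → ℕ
  | _, .nil => 0
  | _, .snoc w _ _ => w.length + 1

/-- Reachability by a directed walk. -/
def Reaches (G : Multigraph) (x y : G.V) : Prop := Nonempty (Walk G x y)

/-- `S` is a root: every vertex is reachable from `S`. -/
def IsRoot (G : Multigraph) (S : G.V) : Prop := ∀ v, Reaches G S v

/-- No two edges share a terminus. -/
def NoClashes (G : Multigraph) : Prop := ∀ e f : G.E, G.t e = G.t f → e = f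

/-- No non-empty closed walks. -/
def Acyclic (G : Multigraph) : Prop := ∀ v : G.V, ∀ w : Walk G v v, w.length = 0

/-- The outgoing subgraph `G_x`: induced on the vertices reachable from `x`. -/
def outGraph (G : Multigraph) (x : G.V) : Multigraph where
  V := {y : G.V // Reaches G x y}
  E := {e : G.E // Reaches G x (G.o e)}
  o := fun e => ⟨G.o e.1, e.2⟩
  t := fun e => ⟨G.t e.1, e.2.elim fun w => ⟨w.snoc e.1 rfl⟩⟩

/-- The natural root of `G_x`. -/
def rootOut (G : Multigraph) (x : G.V) : (outGraph G x).V := ⟨x, ⟨Walk.nil⟩⟩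

/-- o-equivalence of vertices: rooted isomorphism of their outgoing graphs. -/
def OEquiv (G : Multigraph) (v w : G.V) : Prop :=
  RootedIso (outGraph G v) (rootOut G v) (outGraph G w) (rootOut G w)

/-- Walks starting at `S` (with arbitrary terminus). -/
abbrev WalkFrom (G : Multigraph) (S : G.V) : Type := Σ v : G.V, Walk G S v

/-- Terminus of a walk. -/
def term {G : Multigraph} {S : G.V} (w : WalkFrom G S) : G.V := w.1

/-- The unfolding tree `T(G, S)`: vertices are walks from `S`, edges are one-step extensions. -/
def unfoldTree (G : Multigraph) (S : G.V) : Multigraph where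
  V := WalkFrom G S
  E := Σ v : G.V, Walk G S v × {e : G.E // G.o e = v}
  o := fun x => ⟨x.1, x.2.1⟩
  t := fun x => ⟨G.t x.2.2.1, x.2.1.snoc x.2.2.1 x.2.2.2⟩

/-- The empty walk at `S`, root of the unfolding tree. -/
def nilWalk (G : Multigraph) (S : G.V) : WalkFrom G S := ⟨S, Walk.nil⟩

/-- Prefix order on walks from `S`. -/
inductive IsPrefix (G : Multigraph) (S : G.V) : WalkFrom G S → WalkFrom G S → Prop
  | refl (w : WalkFrom G S) : IsPrefix G S w w
  | snoc {w : WalkFrom G S} {v : G.V} (u : Walk G S v) (e : G.E) (h : G.o e = v) :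
      IsPrefix G S w ⟨v, u⟩ → IsPrefix G S w ⟨G.t e, u.snoc e h⟩

/-- The half-tree of the unfolding tree rooted at the walk `w`. -/
def halfTree (G : Multigraph) (S : G.V) (w : WalkFrom G S) : Multigraph where
  V := {u : WalkFrom G S // IsPrefix G S w u}
  E := {x : Σ v : G.V, Walk G S v × {e : G.E // G.o e = v} // IsPrefix G S w ⟨x.1, x.2.1⟩}
  o := fun x => ⟨⟨x.1.1, x.1.2.1⟩, x.2⟩
  t := fun x => ⟨⟨G.t x.1.2.2.1, x.1.2.1.snoc x.1.2.2.1 x.1.2.2.2⟩,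
    IsPrefix.snoc x.1.2.1 x.1.2.2.1 x.1.2.2.2 x.2⟩

/-- A subspace of the unfolding tree: a set of walks closed under extension. -/
def IsSubspace (G : Multigraph) (S : G.V) (𝒮 : Set (WalkFrom G S)) : Prop :=
  ∀ w ∈ 𝒮, ∀ w', IsPrefix G S w w' → w' ∈ 𝒮

/-- An inescapable subspace: every walk extends into it. -/
def Inescapable (G : Multigraph) (S : G.V) (𝒮 : Set (WalkFrom G S)) : Prop :=
  ∀ w : WalkFrom G S, ∃ u ∈ 𝒮, IsPrefix G S w u

/-- A cofinite subspace: a finite union of half-trees. -/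
def CofiniteSubspace (G : Multigraph) (S : G.V) (𝒮 : Set (WalkFrom G S)) : Prop :=
  ∃ F : Set (WalkFrom G S), F.Finite ∧ 𝒮 = {u | ∃ x ∈ F, IsPrefix G S x u}

/-- `B` is a basis of the subspace `𝒮`: a prefix-antichain in `𝒮` such that every
walk in `𝒮` has a prefix in `B`. -/
def IsBasis (G : Multigraph) (S : G.V) (𝒮 B : Set (WalkFrom G S)) : Prop :=
  B ⊆ 𝒮 ∧ (∀ b ∈ B, ∀ b' ∈ B, IsPrefix G S b b' → b = b') ∧
    ∀ w ∈ 𝒮, ∃ b ∈ B, IsPrefix G S b w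

/-- Deleting a set of edges from a graph (also removing vertices all of whose
incident edges are deleted). -/
def deleteEdges (G : Multigraph) (F : Set G.E) : Multigraph where
  V := {v : G.V // ¬((∃ e, G.o e = v ∨ G.t e = v) ∧ ∀ e, (G.o e = v ∨ G.t e = v) → e ∈ F)}
  E := {e : G.E // e ∉ F}
  o := fun e => ⟨G.o e.1, fun h => e.2 (h.2 e.1 (Or.inl rfl))⟩
  t := fun e => ⟨G.t e.1, fun h => e.2 (h.2 e.1 (Or.inr rfl))⟩

/-- Two trees are almost isomorphic: after removing finite subtrees (given by their
finite edge sets), the remainders are isomorphic. -/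
def AlmostIso (T1 T2 : Multigraph) : Prop :=
  ∃ F1 : Set T1.E, F1.Finite ∧ ∃ F2 : Set T2.E, F2.Finite ∧
    Nonempty (Iso (deleteEdges T1 F1) (deleteEdges T2 F2))

open scoped Classical in
/-- The multiset of termini of the outgoing edges of `v`. -/
noncomputable def outSum (G : Multigraph) [Fintype G.E] (v : G.V) : Multiset G.V :=
  ∑ e ∈ Finset.univ.filter (fun e => G.o e = v), ({G.t e} : Multiset G.V)

/-- The defining relations of the graph monoid: `v = Σ_{e ∈ E_o(v)} t(e)` for non-sinks. -/
def monoidRel (G : Multigraph) [Fintype G.E] : Multiset G.V → Multiset G.V → Prop :=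
  fun s u => ∃ v : G.V, (∃ e, G.o e = v) ∧ s = {v} ∧ u = outSum G v

/-- Equality in the graph monoid `M(G)`: the additive congruence generated by the
graph relations on the free commutative monoid `Multiset G.V`. -/
def monoidEq (G : Multigraph) [Fintype G.E] (s u : Multiset G.V) : Prop :=
  addConGen (monoidRel G) s u

/-- A robustly rooted graph: it has a root, and every root has an out-neighbour that
is again a root. -/
def RobustlyRooted (G : Multigraph) : Prop :=
  (∃ S, IsRoot G S) ∧ ∀ v, IsRoot G v → ∃ e, G.o e = v ∧ IsRoot G (G.t e)

/-- The two-vertex multigraph with adjacency matrix `(A B; C D)`;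
`false` is the vertex `x`, `true` is the vertex `y`. -/
def twoVertexGraph (A B C D : ℕ) : Multigraph where
  V := Bool
  E := (Fin A ⊕ Fin B) ⊕ (Fin C ⊕ Fin D)
  o := fun e => match e with | .inl _ => false | .inr _ => true
  t := fun e => match e with
    | .inl (.inl _) => false
    | .inl (.inr _) => true
    | .inr (.inl _) => false
    | .inr (.inr _) => true

instance (A B C D : ℕ) : Fintype (twoVertexGraph A B C D).E :=
  inferInstanceAs (Fintype ((Fin A ⊕ Fin B) ⊕ (Fin C ⊕ Fin D)))


/-- Inverse of a graph isomorphism. -/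
noncomputable def Iso.symmIso {G H : Multigraph} (φ : Iso G H) : Iso H G where
  onV := (Equiv.ofBijective _ φ.bijV).symm
  onE := (Equiv.ofBijective _ φ.bijE).symm
  map_o := fun x => by
    apply φ.bijV.injective
    have h1 : φ.onV ((Equiv.ofBijective _ φ.bijV).symm (H.o x)) = H.o x :=
      (Equiv.ofBijective _ φ.bijV).apply_symm_apply (H.o x)
    have h2 : φ.onE ((Equiv.ofBijective _ φ.bijE).symm x) = x :=
      (Equiv.ofBijective _ φ.bijE).apply_symm_apply x
    rw [← φ.map_o, h2, h1]
  map_t := fun x => by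
    apply φ.bijV.injective
    have h1 : φ.onV ((Equiv.ofBijective _ φ.bijV).symm (H.t x)) = H.t x :=
      (Equiv.ofBijective _ φ.bijV).apply_symm_apply (H.t x)
    have h2 : φ.onE ((Equiv.ofBijective _ φ.bijE).symm x) = x :=
      (Equiv.ofBijective _ φ.bijE).apply_symm_apply x
    rw [← φ.map_t, h2, h1]
  bijV := (Equiv.ofBijective _ φ.bijV).symm.bijective
  bijE := (Equiv.ofBijective _ φ.bijE).symm.bijective

@[simp] lemma Iso.symmIso_onV_apply {G H : Multigraph} (φ : Iso G H) (v : G.V) :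
    φ.symmIso.onV (φ.onV v) = v :=
  (Equiv.ofBijective _ φ.bijV).symm_apply_apply v

@[simp] lemma Iso.onV_symmIso_apply {G H : Multigraph} (φ : Iso G H) (w : H.V) :
    φ.onV (φ.symmIso.onV w) = w :=
  (Equiv.ofBijective _ φ.bijV).apply_symm_apply w

@[simp] lemma Iso.symmIso_onE_apply {G H : Multigraph} (φ : Iso G H) (e : G.E) :
    φ.symmIso.onE (φ.onE e) = e :=
  (Equiv.ofBijective _ φ.bijE).symm_apply_apply e

@[simp] lemma Iso.onE_symmIso_apply {G H : Multigraph} (φ : Iso G H) (f : H.E) :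
    φ.onE (φ.symmIso.onE f) = f :=
  (Equiv.ofBijective _ φ.bijE).apply_symm_apply f

section MkE

variable {K : Multigraph} {S : K.V}

/-- The tree edge at node `p` with underlying edge `e`. -/
def mkE (p : WalkFrom K S) (e : {e : K.E // K.o e = p.1}) : (unfoldTree K S).E :=
  ⟨p.1, (p.2, e)⟩

@[simp] lemma o_mkE (p : WalkFrom K S) (e : {e : K.E // K.o e = p.1}) :
    (unfoldTree K S).o (mkE p e) = p := rfl

@[simp] lemma t_mkE (p : WalkFrom K S) (e : {e : K.E // K.o e = p.1}) :
    (unfoldTree K S).t (mkE p e) = ⟨K.t e.1, p.2.snoc e.1 e.2⟩ := rfl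

lemma mkE_eta (x : (unfoldTree K S).E) :
    mkE ((unfoldTree K S).o x) ⟨x.2.2.1, x.2.2.2⟩ = x := rfl

lemma mkE_congr2 {p q : WalkFrom K S} (h : p = q)
    {e : {e : K.E // K.o e = p.1}} {f : {e : K.E // K.o e = q.1}}
    (hef : e.1 = f.1) : mkE p e = mkE q f := by
  subst h
  cases e; cases f
  cases hef
  rfl

end MkE

section EdgeEquiv

variable {K1 : Multigraph} {S1 : K1.V} {K2 : Multigraph} {S2 : K2.V}

lemma o_onE_mkE (Ψ : Iso (unfoldTree K1 S1) (unfoldTree K2 S2))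
    (p : WalkFrom K1 S1) (e : {e : K1.E // K1.o e = p.1}) :
    (unfoldTree K2 S2).o (Ψ.onE (mkE p e)) = Ψ.onV p := by
  rw [Ψ.map_o, o_mkE]

/-- Forward edge transport along a tree isomorphism. -/
def fwdE (Ψ : Iso (unfoldTree K1 S1) (unfoldTree K2 S2))
    (p : WalkFrom K1 S1) (e : {e : K1.E // K1.o e = p.1}) :
    {h : K2.E // K2.o h = (Ψ.onV p).1} :=
  ⟨(Ψ.onE (mkE p e)).2.2.1, by
    have h1 : (Ψ.onE (mkE p e)).1 = (Ψ.onV p).1 :=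
      congrArg Sigma.fst (o_onE_mkE Ψ p e)
    exact (Ψ.onE (mkE p e)).2.2.2.trans h1⟩

lemma onE_mkE_eq (Ψ : Iso (unfoldTree K1 S1) (unfoldTree K2 S2))
    (p : WalkFrom K1 S1) (e : {e : K1.E // K1.o e = p.1}) :
    Ψ.onE (mkE p e) = mkE (Ψ.onV p) (fwdE Ψ p e) := by
  conv_lhs => rw [← mkE_eta (Ψ.onE (mkE p e))]
  exact mkE_congr2 (o_onE_mkE Ψ p e) rfl

lemma fwdE_congr (Ψ : Iso (unfoldTree K1 S1) (unfoldTree K2 S2))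
    {p q : WalkFrom K1 S1} (h : p = q)
    {e : {e : K1.E // K1.o e = p.1}} {f : {e : K1.E // K1.o e = q.1}}
    (hef : e.1 = f.1) : (fwdE Ψ p e).1 = (fwdE Ψ q f).1 := by
  subst h
  cases e; cases f; cases hef
  rfl

/-- The bijection between out-neighbourhoods induced by a tree isomorphism. -/
noncomputable def edgeEquiv (Ψ : Iso (unfoldTree K1 S1) (unfoldTree K2 S2))
    (p : WalkFrom K1 S1) :
    {e : K1.E // K1.o e = p.1} ≃ {h : K2.E // K2.o h = (Ψ.onV p).1} where
  toFun := fwdE Ψ p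
  invFun h :=
    ⟨(fwdE Ψ.symmIso (Ψ.onV p) h).1,
      (fwdE Ψ.symmIso (Ψ.onV p) h).2.trans
        (congrArg Sigma.fst (Iso.symmIso_onV_apply Ψ p))⟩
  left_inv e := by
    apply Subtype.ext
    show (fwdE Ψ.symmIso (Ψ.onV p) (fwdE Ψ p e)).1 = e.1
    have h1 : (fwdE Ψ.symmIso (Ψ.onV p) (fwdE Ψ p e)).1
        = (Ψ.symmIso.onE (mkE (Ψ.onV p) (fwdE Ψ p e))).2.2.1 := rfl
    rw [h1, ← onE_mkE_eq, Iso.symmIso_onE_apply]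
    rfl
  right_inv h := by
    apply Subtype.ext
    have hq : Ψ.symmIso.onV (Ψ.onV p) = p := Iso.symmIso_onV_apply Ψ p
    have h3 : (fwdE Ψ (Ψ.symmIso.onV (Ψ.onV p)) (fwdE Ψ.symmIso (Ψ.onV p) h)).1 = h.1 := by
      have h4 : (fwdE Ψ (Ψ.symmIso.onV (Ψ.onV p)) (fwdE Ψ.symmIso (Ψ.onV p) h)).1
          = (Ψ.onE (mkE (Ψ.symmIso.onV (Ψ.onV p)) (fwdE Ψ.symmIso (Ψ.onV p) h))).2.2.1 := rfl
      rw [h4, ← onE_mkE_eq Ψ.symmIso (Ψ.onV p) h, Iso.onE_symmIso_apply]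
      rfl
    exact (fwdE_congr Ψ hq.symm rfl).trans h3

lemma edgeEquiv_t (Ψ : Iso (unfoldTree K1 S1) (unfoldTree K2 S2))
    (p : WalkFrom K1 S1) (e : {e : K1.E // K1.o e = p.1}) :
    (Ψ.onV ⟨K1.t e.1, p.2.snoc e.1 e.2⟩).1 = K2.t ((edgeEquiv Ψ p) e).1 := by
  have h1 : (⟨K1.t e.1, p.2.snoc e.1 e.2⟩ : WalkFrom K1 S1)
      = (unfoldTree K1 S1).t (mkE p e) := rfl
  rw [h1, ← Ψ.map_t, onE_mkE_eq]
  rfl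

end EdgeEquiv
section KeyNEC

/-- Chains witnessing the equivalence closure of a relation. -/
inductive GChain (K : Multigraph) (g : K.V → K.V → Prop) : K.V → K.V → Type where
  | nil (a : K.V) : GChain K g a a
  | fwd {a b c : K.V} (ch : GChain K g a b) (h : g b c) : GChain K g a c
  | bwd {a b c : K.V} (ch : GChain K g a b) (h : g c b) : GChain K g a c

variable {K : Multigraph} {g : K.V → K.V → Prop}

def GChain.comp : ∀ {a b c : K.V}, GChain K g a b → GChain K g b c → GChain K g a c
  | _, _, _, c1, .nil _ => c1
  | _, _, _, c1, .fwd ch h => .fwd (c1.comp ch) h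
  | _, _, _, c1, .bwd ch h => .bwd (c1.comp ch) h

def GChain.reverse : ∀ {a b : K.V}, GChain K g a b → GChain K g b a
  | _, _, .nil a => .nil a
  | _, _, .fwd ch h => (GChain.bwd (.nil _) h).comp ch.reverse
  | _, _, .bwd ch h => (GChain.fwd (.nil _) h).comp ch.reverse

variable (stp : ∀ v v', g v v' →
  ∃ σ : {e : K.E // K.o e = v} ≃ {e : K.E // K.o e = v'},
    ∀ e, g (K.t e.1) (K.t (σ e).1))

noncomputable def gsig {v v' : K.V} (h : g v v') :
    {e : K.E // K.o e = v} ≃ {e : K.E // K.o e = v'} :=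
  (stp v v' h).choose

lemma gsig_t {v v' : K.V} (h : g v v') (e : {e : K.E // K.o e = v}) :
    g (K.t e.1) (K.t ((gsig stp h) e).1) :=
  (stp v v' h).choose_spec e

noncomputable def gtrans : ∀ {a b : K.V}, GChain K g a b →
    ({e : K.E // K.o e = a} ≃ {e : K.E // K.o e = b})
  | _, _, .nil _ => Equiv.refl _
  | _, _, .fwd ch h => (gtrans ch).trans (gsig stp h)
  | _, _, .bwd ch h => (gtrans ch).trans (gsig stp h).symm

/-- The equivalence closure. -/
def sVrel (K : Multigraph) (g : K.V → K.V → Prop) (a b : K.V) : Prop :=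
  Nonempty (GChain K g a b)

lemma sVrel_refl (a : K.V) : sVrel K g a a := ⟨.nil a⟩
lemma sVrel_symm {a b : K.V} : sVrel K g a b → sVrel K g b a := fun ⟨c⟩ => ⟨c.reverse⟩
lemma sVrel_trans {a b c : K.V} : sVrel K g a b → sVrel K g b c → sVrel K g a c :=
  fun ⟨c1⟩ ⟨c2⟩ => ⟨c1.comp c2⟩
lemma sVrel_of_g {a b : K.V} (h : g a b) : sVrel K g a b := ⟨.fwd (.nil a) h⟩

lemma gtrans_t : ∀ {a b : K.V} (c : GChain K g a b) (e : {e : K.E // K.o e = a}),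
    sVrel K g (K.t e.1) (K.t ((gtrans stp c) e).1)
  | _, _, .nil _, e => by
      simp only [gtrans, Equiv.refl_apply]
      exact sVrel_refl _
  | _, _, .fwd ch h, e => by
      simp only [gtrans, Equiv.trans_apply]
      exact sVrel_trans (gtrans_t ch e) (sVrel_of_g (gsig_t stp h ((gtrans stp ch) e)))
  | _, _, .bwd ch h, e => by
      simp only [gtrans, Equiv.trans_apply]
      have step := gsig_t stp h ((gsig stp h).symm ((gtrans stp ch) e))
      rw [Equiv.apply_symm_apply] at step
      exact sVrel_trans (gtrans_t ch e) (sVrel_symm (sVrel_of_g step))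

noncomputable def gsd (K : Multigraph) (g : K.V → K.V → Prop) : Setoid K.V :=
  ⟨sVrel K g, ⟨sVrel_refl, sVrel_symm, sVrel_trans⟩⟩

noncomputable def grp (K : Multigraph) (g : K.V → K.V → Prop) (w : K.V) : K.V :=
  (Quotient.mk (gsd K g) w).out

lemma grp_rel (w : K.V) : sVrel K g (grp K g w) w :=
  Quotient.mk_out (s := gsd K g) w

lemma grp_congr {w w' : K.V} (h : sVrel K g w w') : grp K g w = grp K g w' :=
  congrArg Quotient.out (Quotient.sound (a := w) (b := w') h)

noncomputable def gFe (w : K.V) :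
    {e : K.E // K.o e = grp K g w} ≃ {e : K.E // K.o e = w} :=
  gtrans stp (grp_rel (g := g) w).some

lemma gFe_t (w : K.V) (e : {e : K.E // K.o e = grp K g w}) :
    sVrel K g (K.t e.1) (K.t ((gFe stp w) e).1) :=
  gtrans_t stp _ e

lemma gFe_symm_congr {w w' : K.V} (h : w = w') (e : K.E) (he : K.o e = w) :
    (((gFe stp w).symm ⟨e, he⟩)).1 = (((gFe stp w').symm ⟨e, h ▸ he⟩)).1 := by
  subst h; rfl

/-- The main construction: a non-edge-collapsing graph equivalence containing `g`. -/
theorem keyNEC (K : Multigraph) (g : K.V → K.V → Prop)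
    (stp : ∀ v v', g v v' →
      ∃ σ : {e : K.E // K.o e = v} ≃ {e : K.E // K.o e = v'},
        ∀ e, g (K.t e.1) (K.t (σ e).1)) :
    ∃ s : GraphEquiv K, s.NonEdgeCollapsing ∧ ∀ v v', g v v' → s.rV v v' := by
  classical
  refine ⟨⟨sVrel K g,
    fun e f => grp K g (K.o e) = grp K g (K.o f) ∧
      (((gFe stp (K.o e)).symm ⟨e, rfl⟩)).1 = (((gFe stp (K.o f)).symm ⟨f, rfl⟩)).1,
    ⟨sVrel_refl, sVrel_symm, sVrel_trans⟩,
    ⟨fun e => ⟨rfl, rfl⟩, fun h => ⟨h.1.symm, h.2.symm⟩,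
      fun h1 h2 => ⟨h1.1.trans h2.1, h1.2.trans h2.2⟩⟩,
    ?_, ?_⟩, ?_, fun v v' h => sVrel_of_g h⟩
  · -- compat_o
    intro e f h
    exact sVrel_trans (sVrel_trans (sVrel_symm (grp_rel (K.o e))) (h.1 ▸ sVrel_refl _))
      (grp_rel (K.o f))
  · -- compat_t
    intro e f h
    have h1 := gFe_t stp (K.o e) ((gFe stp (K.o e)).symm ⟨e, rfl⟩)
    rw [Equiv.apply_symm_apply] at h1
    have h2 := gFe_t stp (K.o f) ((gFe stp (K.o f)).symm ⟨f, rfl⟩)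
    rw [Equiv.apply_symm_apply] at h2
    rw [h.2] at h1
    exact sVrel_trans (sVrel_symm h1) h2
  · -- NonEdgeCollapsing
    intro v v' hvv' e he
    subst he
    have hrp : grp K g (K.o e) = grp K g v' := grp_congr hvv'
    set eh := (gFe stp (K.o e)).symm ⟨e, rfl⟩ with heh
    have hx : K.o eh.1 = grp K g v' := eh.2.trans hrp
    set e' := ((gFe stp v') ⟨eh.1, hx⟩) with he'
    refine ⟨e'.1, ⟨e'.2, hrp.trans (by rw [e'.2]), ?_⟩, ?_⟩
    · -- edge relation second component
      rw [gFe_symm_congr stp e'.2 e'.1 rfl]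
      have : (⟨e'.1, e'.2⟩ : {x : K.E // K.o x = v'}) = (gFe stp v') ⟨eh.1, hx⟩ :=
        Subtype.ext rfl
      rw [this, Equiv.symm_apply_apply]
    · -- uniqueness
      rintro f ⟨hf1, hf2, hf3⟩
      rw [gFe_symm_congr stp hf1 f rfl] at hf3
      have : (gFe stp v').symm ⟨f, hf1⟩ = ⟨eh.1, hx⟩ := Subtype.ext hf3.symm
      have h5 : (⟨f, hf1⟩ : {x : K.E // K.o x = v'}) = (gFe stp v') ⟨eh.1, hx⟩ := by
        rw [← this, Equiv.apply_symm_apply]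
      exact congrArg Subtype.val h5

theorem keyNEC_triv (K : Multigraph) (hnr : NonRedundant K) (g : K.V → K.V → Prop)
    (stp : ∀ v v', g v v' →
      ∃ σ : {e : K.E // K.o e = v} ≃ {e : K.E // K.o e = v'},
        ∀ e, g (K.t e.1) (K.t (σ e).1)) :
    ∀ v v', g v v' → v = v' := by
  obtain ⟨s, hnec, hsub⟩ := keyNEC K g stp
  exact fun v v' h => (hnr s hnec).1 v v' (hsub v v' h)

end KeyNEC
section Forward

variable {K1 : Multigraph} {S1 : K1.V} {K2 : Multigraph} {S2 : K2.V}

/-- Walks with the same image-terminus have the same terminus, if the source is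
non-redundant. -/
lemma term_inj (Ψ : Iso (unfoldTree K1 S1) (unfoldTree K2 S2))
    (hnr : NonRedundant K1) :
    ∀ p p' : WalkFrom K1 S1, (Ψ.onV p).1 = (Ψ.onV p').1 → p.1 = p'.1 := by
  classical
  set g : K1.V → K1.V → Prop := fun v v' =>
    ∃ p p' : WalkFrom K1 S1, p.1 = v ∧ p'.1 = v' ∧ (Ψ.onV p).1 = (Ψ.onV p').1 with hg
  have stp : ∀ v v', g v v' →
      ∃ σ : {e : K1.E // K1.o e = v} ≃ {e : K1.E // K1.o e = v'},
        ∀ e, g (K1.t e.1) (K1.t (σ e).1) := by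
    rintro v v' ⟨p, p', hp, hp', ht⟩
    subst hp; subst hp'
    refine ⟨(edgeEquiv Ψ p).trans
      ((Equiv.subtypeEquivRight (fun h => by rw [ht])).trans (edgeEquiv Ψ p').symm), ?_⟩
    intro e
    set σe := (edgeEquiv Ψ p').symm
      ((Equiv.subtypeEquivRight (q := fun h => K2.o h = (Ψ.onV p').1)
        (fun h => by rw [ht])) ((edgeEquiv Ψ p) e)) with hσe
    refine ⟨⟨K1.t e.1, p.2.snoc e.1 e.2⟩,
      ⟨K1.t σe.1, p'.2.snoc σe.1 σe.2⟩, rfl, rfl, ?_⟩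
    have h1 := edgeEquiv_t Ψ p e
    have h2 := edgeEquiv_t Ψ p' σe
    rw [h1, h2, hσe, Equiv.apply_symm_apply, Equiv.subtypeEquivRight_apply]
  intro p p' h
  exact keyNEC_triv K1 hnr g stp p.1 p'.1 ⟨p, p', rfl, rfl, h⟩

end Forward
section Assemble

/-- Forward direction: a rooted isomorphism of unfolding trees of non-redundant
rooted graphs yields a rooted isomorphism of the graphs. -/
lemma forward_dir {G : Multigraph} {S : G.V} {H : Multigraph} {R : H.V}
    (hS : IsRoot G S) (hR : IsRoot H R)
    (hGnr : NonRedundant G) (hHnr : NonRedundant H)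
    (Φ : Iso (unfoldTree G S) (unfoldTree H R))
    (hroot : Φ.onV (nilWalk G S) = nilWalk H R) :
    RootedIso G S H R := by
  classical
  have C1 : ∀ p p' : WalkFrom G S, (Φ.onV p).1 = (Φ.onV p').1 → p.1 = p'.1 :=
    term_inj Φ hGnr
  have C2 : ∀ p p' : WalkFrom G S, p.1 = p'.1 → (Φ.onV p).1 = (Φ.onV p').1 := by
    intro p p' h
    refine term_inj Φ.symmIso hHnr (Φ.onV p) (Φ.onV p') ?_
    rw [Iso.symmIso_onV_apply Φ p, Iso.symmIso_onV_apply Φ p']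
    exact h
  let pv : G.V → WalkFrom G S := fun v => ⟨v, (hS v).some⟩
  have tau_spec : ∀ p : WalkFrom G S, (Φ.onV p).1 = (Φ.onV (pv p.1)).1 :=
    fun p => C2 p (pv p.1) rfl
  let fV : G.V → H.V := fun v => (Φ.onV (pv v)).1
  let fE : G.E → H.E := fun e => (edgeEquiv Φ (pv (G.o e)) ⟨e, rfl⟩).1
  have onE_eq : ∀ (e : G.E) (v : G.V) (h : G.o e = v),
      fE e = (edgeEquiv Φ (pv v) ⟨e, h⟩).1 := by
    intro e v h; subst h; rfl
  have hmap_o : ∀ e, H.o (fE e) = fV (G.o e) :=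
    fun e => (edgeEquiv Φ (pv (G.o e)) ⟨e, rfl⟩).2
  have hmap_t : ∀ e, H.t (fE e) = fV (G.t e) := by
    intro e
    have h1 := edgeEquiv_t Φ (pv (G.o e)) ⟨e, rfl⟩
    exact h1.symm.trans (tau_spec ⟨G.t e, (pv (G.o e)).2.snoc e rfl⟩)
  have hinjV : Function.Injective fV := by
    intro v v' h
    exact C1 (pv v) (pv v') h
  have hsurjV : Function.Surjective fV := by
    intro w
    set q : WalkFrom H R := ⟨w, (hR w).some⟩ with hq
    refine ⟨(Φ.symmIso.onV q).1, ?_⟩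
    refine (tau_spec (Φ.symmIso.onV q)).symm.trans ?_
    rw [Iso.onV_symmIso_apply Φ q]
  have hinjE : Function.Injective fE := by
    intro e e' h
    have hv : fV (G.o e) = fV (G.o e') := by
      rw [← hmap_o, ← hmap_o, h]
    have hov : G.o e = G.o e' := hinjV hv
    rw [onE_eq e' (G.o e) hov.symm] at h
    have h2 : (⟨e, rfl⟩ : {x : G.E // G.o x = (pv (G.o e)).1})
        = ⟨e', hov.symm⟩ := (edgeEquiv Φ (pv (G.o e))).injective (Subtype.ext h)
    exact congrArg Subtype.val h2
  have hsurjE : Function.Surjective fE := by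
    intro h0
    obtain ⟨v, hv⟩ := hsurjV (H.o h0)
    set e := (edgeEquiv Φ (pv v)).symm ⟨h0, hv.symm⟩ with he
    refine ⟨e.1, ?_⟩
    have h3 : fE e.1 = (edgeEquiv Φ (pv v) ⟨e.1, e.2⟩).1 := onE_eq e.1 v e.2
    rw [h3]
    have h4 : (⟨e.1, e.2⟩ : {x : G.E // G.o x = (pv v).1}) = e := rfl
    rw [h4, he, Equiv.apply_symm_apply]
  refine ⟨⟨⟨fV, fE, hmap_o, hmap_t⟩, ⟨hinjV, hsurjV⟩, ⟨hinjE, hsurjE⟩⟩, ?_⟩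
  show fV S = R
  exact (tau_spec (nilWalk G S)).symm.trans (congrArg Sigma.fst hroot)

end Assemble
section Reverse

variable {G : Multigraph} {S : G.V} {H : Multigraph} {R : H.V}

/-- Map a walk through a graph isomorphism. -/
def mapWalk (φ : Iso G H) (hr : φ.onV S = R) :
    ∀ {v : G.V}, Walk G S v → {q : WalkFrom H R // q.1 = φ.onV v}
  | _, .nil => ⟨⟨R, .nil⟩, hr.symm⟩
  | _, .snoc w e he =>
    ⟨⟨H.t (φ.onE e), (mapWalk φ hr w).1.2.snoc (φ.onE e)
      (by rw [φ.map_o, he]; exact (mapWalk φ hr w).2.symm)⟩, φ.map_t e⟩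

lemma walkFrom_snoc_congr {v₁ v₂ : G.V} {w₁ : Walk G S v₁} {w₂ : Walk G S v₂}
    (hw : (⟨v₁, w₁⟩ : WalkFrom G S) = ⟨v₂, w₂⟩) {e₁ e₂ : G.E} (he : e₁ = e₂)
    (h₁ : G.o e₁ = v₁) (h₂ : G.o e₂ = v₂) :
    (⟨G.t e₁, w₁.snoc e₁ h₁⟩ : WalkFrom G S) = ⟨G.t e₂, w₂.snoc e₂ h₂⟩ := by
  subst he
  have h12 := hw
  rw [Sigma.mk.inj_iff] at h12
  obtain ⟨hv, hw2⟩ := h12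
  subst hv
  rw [eq_of_heq hw2]

lemma mapWalk_rt (φ : Iso G H) (φ' : Iso H G) (hr : φ.onV S = R)
    (hr' : φ'.onV R = S) (hE : ∀ e, φ'.onE (φ.onE e) = e) :
    ∀ {v : G.V} (w : Walk G S v),
      (mapWalk φ' hr' ((mapWalk φ hr w).1.2)).1 = ⟨v, w⟩ := by
  intro v w
  induction w with
  | nil => rfl
  | snoc w e he ih =>
    exact walkFrom_snoc_congr ih (hE e) _ he

/-- Lift a rooted graph isomorphism to a homomorphism of unfolding trees. -/
def treeHom (φ : Iso G H) (hr : φ.onV S = R) :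
    Hom (unfoldTree G S) (unfoldTree H R) where
  onV p := (mapWalk φ hr p.2).1
  onE x := mkE ((mapWalk φ hr x.2.1).1)
    ⟨φ.onE x.2.2.1, by rw [φ.map_o, x.2.2.2]; exact (mapWalk φ hr x.2.1).2.symm⟩
  map_o x := rfl
  map_t x := rfl

lemma treeHom_rtV (φ : Iso G H) (φ' : Iso H G) (hr : φ.onV S = R)
    (hr' : φ'.onV R = S) (hE : ∀ e, φ'.onE (φ.onE e) = e) (p : WalkFrom G S) :
    (treeHom φ' hr').onV ((treeHom φ hr).onV p) = p := by
  show (mapWalk φ' hr' ((mapWalk φ hr p.2).1.2)).1 = p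
  exact mapWalk_rt φ φ' hr hr' hE p.2

lemma treeHom_rtE (φ : Iso G H) (φ' : Iso H G) (hr : φ.onV S = R)
    (hr' : φ'.onV R = S) (hE : ∀ e, φ'.onE (φ.onE e) = e)
    (x : (unfoldTree G S).E) :
    (treeHom φ' hr').onE ((treeHom φ hr).onE x) = x := by
  show mkE _ _ = x
  conv_rhs => rw [← mkE_eta x]
  exact mkE_congr2 (mapWalk_rt φ φ' hr hr' hE x.2.1) (hE x.2.2.1)

/-- Reverse direction: a rooted graph isomorphism yields a rooted isomorphism of
unfolding trees. -/
lemma reverse_dir (φ : Iso G H) (hr : φ.onV S = R) :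
    RootedIso (unfoldTree G S) (nilWalk G S) (unfoldTree H R) (nilWalk H R) := by
  classical
  have hr' : φ.symmIso.onV R = S := by
    rw [← hr, Iso.symmIso_onV_apply]
  have hE : ∀ e, φ.symmIso.onE (φ.onE e) = e := Iso.symmIso_onE_apply φ
  have hE' : ∀ f, φ.onE (φ.symmIso.onE f) = f := Iso.onE_symmIso_apply φ
  refine ⟨⟨treeHom φ hr, ?_, ?_⟩, ?_⟩
  · exact Function.bijective_iff_has_inverse.mpr
      ⟨(treeHom φ.symmIso hr').onV, treeHom_rtV φ φ.symmIso hr hr' hE,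
        treeHom_rtV φ.symmIso φ hr' hr hE'⟩
  · exact Function.bijective_iff_has_inverse.mpr
      ⟨(treeHom φ.symmIso hr').onE, treeHom_rtE φ φ.symmIso hr hr' hE,
        treeHom_rtE φ.symmIso φ hr' hr hE'⟩
  · rfl

end Reverse

end Multigraph

open Multigraph

/-- Non-redundant rooted multigraphs have rooted-isomorphic unfolding
trees iff they are rooted-isomorphic. -/
theorem statement8 (G : Multigraph) (S : G.V) (H : Multigraph) (R : H.V)
    (hS : IsRoot G S) (hR : IsRoot H R)
    (hGnr : NonRedundant G) (hHnr : NonRedundant H) :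
    RootedIso (unfoldTree G S) (nilWalk G S) (unfoldTree H R) (nilWalk H R) ↔
      RootedIso G S H R := by
  constructor
  · rintro ⟨Φ, hroot⟩
    exact forward_dir hS hR hGnr hHnr Φ hroot
  · rintro ⟨φ, hr⟩
    exact reverse_dir φ hr
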